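/- arXiv:1602.08625 — 4 statements merged into one kernel-verified Lean document; each statement's English description precedes it below -/
import Mathlib

section
/- Let R be a Noetherian local ring and let I and J be nonzero proper ideals of R with I = (0 :_R J) and J = (0 :_R I). Then Ext^1_R(R/I, R/I) is isomorphic to Hom_R(Hom_R(R/J, R), R/I). -/
set_option maxHeartbeats 1000000
set_option linter.unusedVariables false
open CategoryTheory Limits Opposite LinearMap
noncomputable section

section Res
variable {C : Type*} [Category C] [Abelian C] [EnoughProjectives C]

def resComplex {X Y : C} (p : X ⟶ Y) : ChainComplex C ℕ :=
  ChainComplex.mk' X (Projective.syzygies p) (Projective.d p)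
    (fun f => ⟨_, Projective.d f, by
      exact (Category.assoc _ _ _).trans (by rw [kernel.condition]; exact Limits.comp_zero)⟩)

lemma resComplex_d_1_0 {X Y : C} (p : X ⟶ Y) : (resComplex p).d 1 0 = Projective.d p := by
  simp [resComplex]

instance resComplex_projective {X Y : C} (p : X ⟶ Y) [Projective X] (n : ℕ) :
    Projective ((resComplex p).X n) := by
  obtain (_ | _ | _ | n) := n
  · dsimp [resComplex]; infer_instance
  all_goals apply Projective.projective_over

lemma resComplex_exactAt_succ {X Y : C} (p : X ⟶ Y) (n : ℕ) :
    (resComplex p).ExactAt (n + 1) := by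
  rw [HomologicalComplex.exactAt_iff' _ (n + 1 + 1) (n + 1) n (by simp) (by simp)]
  refine (ShortComplex.exact_iff_of_iso ?_).2 (exact_d_f ((resComplex p).d (n + 1) n))
  exact ShortComplex.isoMk
    (ChainComplex.mk'XIso _ _ _ _ n : (resComplex p).X (n + 2) ≅ _)
    (Iso.refl _) (Iso.refl _)
    (by exact (ChainComplex.mk'_d _ _ _ _ n).symm.trans (Category.comp_id _).symm)
    (by exact (Category.id_comp _).trans (Category.comp_id _).symm)

def resOf {X Y : C} (p : X ⟶ Y) [Projective X] [Epi p] : ProjectiveResolution Y where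
  complex := resComplex p
  π := (ChainComplex.toSingle₀Equiv _ _).symm ⟨p, by
          simp [resComplex, Projective.d]
          exact (Category.assoc _ _ _).trans (by rw [kernel.condition]; exact Limits.comp_zero)⟩
  quasiIso := ⟨fun n => by
    cases n
    · rw [ChainComplex.quasiIsoAt₀_iff, ShortComplex.quasiIso_iff_of_zeros']
      · refine (ShortComplex.exact_and_epi_g_iff_of_iso ?_).2
          ⟨exact_d_f p, by dsimp; infer_instance⟩
        exact ShortComplex.isoMk (Iso.refl _) (Iso.refl _) (Iso.refl _)
          (by exact (Category.id_comp _).trans ((resComplex_d_1_0 p).symm.trans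
            (Category.comp_id _).symm))
          (by exact (Category.id_comp _).trans
                ((ChainComplex.toSingle₀Equiv_symm_apply_f_zero (C := resComplex p) (X := Y) p _).symm.trans (Category.comp_id _).symm))
      all_goals rfl
    · rw [quasiIsoAt_iff_exactAt']
      · apply resComplex_exactAt_succ
      · apply ChainComplex.exactAt_succ_single_obj⟩

lemma resOf_π_f_zero {X Y : C} (p : X ⟶ Y) [Projective X] [Epi p] :
    (resOf p).π.f 0 = p := ChainComplex.toSingle₀Equiv_symm_apply_f_zero _ _

end Res

section ModulePart
variable {R : Type} [CommRing R]

/-- Hom(R/J, R)  ≃  ann J -/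
def homQuotEquivAnn (J : Ideal R) :
    ((R ⧸ J) →ₗ[R] R) ≃ₗ[R] (J.annihilator : Submodule R R) where
  toFun f := ⟨f (Submodule.Quotient.mk 1), by
    rw [Submodule.mem_annihilator]
    intro j hj
    have : (Submodule.Quotient.mk (j : R) : R ⧸ J) = 0 := (Submodule.Quotient.mk_eq_zero _).2 hj
    rw [smul_eq_mul, mul_comm, ← smul_eq_mul, ← f.map_smul, ← Submodule.Quotient.mk_smul,
      smul_eq_mul, mul_one, this, f.map_zero]⟩
  map_add' f g := by ext; simp
  map_smul' r f := by ext; simp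
  invFun x := J.liftQ (LinearMap.toSpanSingleton R R (x : R)) (by
    intro j hj
    simp only [mem_ker, toSpanSingleton_apply]
    have := Submodule.mem_annihilator.1 x.2 j hj
    rw [smul_eq_mul] at this ⊢
    rw [mul_comm, this])
  left_inv f := by
    apply LinearMap.ext
    intro x
    obtain ⟨r, rfl⟩ := Submodule.Quotient.mk_surjective J x
    simp only [Submodule.liftQ_apply, toSpanSingleton_apply]
    rw [← f.map_smul, ← Submodule.Quotient.mk_smul, smul_eq_mul, mul_one]
  right_inv x := by
    apply Subtype.ext
    show (J.liftQ (LinearMap.toSpanSingleton R R (x : R)) _) (Submodule.Quotient.mk 1) = (x : R)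
    rw [Submodule.liftQ_apply, toSpanSingleton_apply, one_smul]

@[reducible] def linQuotACG (I : Ideal R) (P : Type) [AddCommGroup P] [Module R P] :
    AddCommGroup (P →ₗ[R] (R ⧸ I)) := LinearMap.addCommGroup
attribute [local instance] linQuotACG

def quotEquiv (I : Ideal R) {P1 P2 W : Type} [AddCommGroup P1] [Module R P1]
    [AddCommGroup P2] [Module R P2] [AddCommGroup W] [Module R W]
    (d10 : P1 →ₗ[R] R) (d21 : P2 →ₗ[R] P1)
    (h1 : range d10 = I)
    (h2 : range d21 = ker d10)
    (G : (P1 →ₗ[R] (R ⧸ I)) →ₗ[R] (P2 →ₗ[R] (R ⧸ I))) (hG : ∀ f, G f = f ∘ₗ d21)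
    (T : W →ₗ[R] ker G)
    (hT : ∀ z : ker G, z ∈ range T ↔ ∃ f0 : R →ₗ[R] (R ⧸ I), (z : P1 →ₗ[R] (R ⧸ I)) = f0 ∘ₗ d10) :
    ((ker G ⧸ range T) ≃ₗ[R] ((I : Submodule R R) →ₗ[R] (R ⧸ I))) := by
  have hd10' : ∀ y : P1, d10 y ∈ I := fun y => h1 ▸ mem_range_self d10 y
  set d10' : P1 →ₗ[R] (I : Submodule R R) := d10.codRestrict I hd10' with hd
  have hker' : ker d10' = ker d10 := ker_codRestrict I d10 hd10'
  have hsurj : Function.Surjective d10' := by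
    rintro ⟨x, hx⟩
    rw [← h1] at hx
    obtain ⟨y, hy⟩ := hx
    exact ⟨y, Subtype.ext hy⟩
  -- the map Hom(I, R/I) → ker G
  have hmem : ∀ h : (I : Submodule R R) →ₗ[R] (R ⧸ I), (h ∘ₗ d10') ∈ ker G := by
    intro h
    rw [mem_ker, hG]
    apply LinearMap.ext
    intro y
    have h0 : d10 (d21 y) = 0 := by
      rw [← mem_ker, ← h2]; exact mem_range_self d21 y
    have : d10' (d21 y) = 0 := by
      apply Subtype.ext; rw [hd]; simpa using h0
    simp only [LinearMap.comp_apply, LinearMap.comp_apply, this, map_zero, LinearMap.zero_apply]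
  set Ψ : ((I : Submodule R R) →ₗ[R] (R ⧸ I)) →ₗ[R] ker G :=
    { toFun := fun h => ⟨h ∘ₗ d10', hmem h⟩
      map_add' := fun h g => by apply Subtype.ext; apply LinearMap.ext; intro y; simp
      map_smul' := fun r h => by apply Subtype.ext; apply LinearMap.ext; intro y; simp } with hΨ
  set Φ : ((I : Submodule R R) →ₗ[R] (R ⧸ I)) →ₗ[R] (ker G ⧸ range T) :=
    (range T).mkQ ∘ₗ Ψ with hΦ
  have hinj : Function.Injective Φ := by
    rw [← ker_eq_bot]
    apply (Submodule.eq_bot_iff _).2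
    intro h hh
    rw [mem_ker, hΦ, LinearMap.comp_apply, Submodule.mkQ_apply, Submodule.Quotient.mk_eq_zero] at hh
    rw [hT] at hh
    obtain ⟨f0, hf0⟩ := hh
    apply LinearMap.ext
    rintro ⟨x, hx⟩
    rw [← h1] at hx
    obtain ⟨y, rfl⟩ := hx
    have : h (d10' y) = f0 (d10 y) := by
      have := congrArg (fun (u : P1 →ₗ[R] (R ⧸ I)) => u y) hf0
      simpa [hΨ] using this
    have hd10'y : d10' y = ⟨d10 y, hd10' y⟩ := rfl
    rw [hd10'y] at this
    rw [this]
    obtain ⟨r, hr⟩ := Submodule.Quotient.mk_surjective I (f0 1)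
    have : f0 (d10 y) = (d10 y) • f0 1 := by
      rw [← f0.map_smul, smul_eq_mul, mul_one]
    rw [LinearMap.zero_apply, this, ← hr, ← Submodule.Quotient.mk_smul, Submodule.Quotient.mk_eq_zero,
      smul_eq_mul]
    exact I.mul_mem_right r (hd10' y)
  have hsurjΦ : Function.Surjective Φ := by
    intro c
    obtain ⟨z, rfl⟩ := Submodule.Quotient.mk_surjective (range T) c
    have hle : ker d10' ≤ ker (z : P1 →ₗ[R] (R ⧸ I)) := by
      rw [hker', ← h2]
      rintro x ⟨y, rfl⟩
      have hz := z.2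
      rw [mem_ker, hG] at hz
      have := congrArg (fun (u : P2 →ₗ[R] (R ⧸ I)) => u y) hz
      simpa using this
    set q : (P1 ⧸ ker d10') →ₗ[R] (R ⧸ I) := (ker d10').liftQ (z : P1 →ₗ[R] (R ⧸ I)) hle with hq
    set e : (P1 ⧸ ker d10') ≃ₗ[R] (I : Submodule R R) := d10'.quotKerEquivOfSurjective hsurj with he
    refine ⟨q ∘ₗ e.symm.toLinearMap, ?_⟩
    rw [hΦ, LinearMap.comp_apply, Submodule.mkQ_apply]
    congr 1
    apply Subtype.ext
    apply LinearMap.ext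
    intro y
    have he1 : e (Submodule.Quotient.mk y) = d10' y := rfl
    have he2 : e.symm (d10' y) = Submodule.Quotient.mk y := by
      rw [← he1, LinearEquiv.symm_apply_apply]
    show q (e.symm.toLinearMap (d10' y)) = (z : P1 →ₗ[R] (R ⧸ I)) y
    rw [LinearEquiv.coe_toLinearMap, he2, hq, Submodule.liftQ_apply]
  exact (LinearEquiv.ofBijective Φ ⟨hinj, hsurjΦ⟩).symm

end ModulePart


/-- Let `R` be a Noetherian local ring and `I`, `J` nonzero proper ideals
with `I = (0 :_R J)` and `J = (0 :_R I)`.  Then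
`Ext¹_R(R/I, R/I) ≅ Hom_R(Hom_R(R/J, R), R/I)`. -/
theorem ext_one_iso_hom_hom
    (R : Type) [CommRing R] [IsNoetherianRing R] [IsLocalRing R]
    (I J : Ideal R) (hI0 : I ≠ ⊥) (hI1 : I ≠ ⊤) (hJ0 : J ≠ ⊥) (hJ1 : J ≠ ⊤)
    (hIJ : I = J.annihilator) (hJI : J = I.annihilator) :
    Nonempty
      ((((Ext R (ModuleCat.{0} R) 1).obj
            (op (ModuleCat.of R (R ⧸ I)))).obj (ModuleCat.of R (R ⧸ I)))
        ≃ₗ[R] (((R ⧸ J) →ₗ[R] R) →ₗ[R] (R ⧸ I))) := by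
  classical
  let M : ModuleCat.{0} R := ModuleCat.of R (R ⧸ I)
  let p : ModuleCat.of R R ⟶ M := ModuleCat.ofHom I.mkQ
  haveI : Epi p := (ModuleCat.epi_iff_surjective _).2 (Submodule.mkQ_surjective I)
  haveI : Projective (ModuleCat.of R R) :=
    (IsProjective.iff_projective _).1 inferInstance
  let P : ProjectiveResolution M := resOf p
  let K := P.complex.linearYonedaObj R M
  let i₁ : (((Ext R (ModuleCat.{0} R) 1).obj (op M)).obj M) ≅ K.homology 1 := P.isoExt 1 M
  let i₂ : K.homology 1 ≅ (K.sc' 0 1 2).homology :=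
    ShortComplex.homologyMapIso (K.isoSc' 0 1 2 (by simp) (by simp))
  let S := K.sc' 0 1 2
  -- the differentials as linear maps
  let d10 : ↥(P.complex.X 1) →ₗ[R] R := (P.complex.d 1 0).hom
  let d21 : ↥(P.complex.X 2) →ₗ[R] ↥(P.complex.X 1) := (P.complex.d 2 1).hom
  have h1 : range d10 = I := by
    have hex := P.exact₀.moduleCat_range_eq_ker
    have hπ : P.π.f 0 = p := resOf_π_f_zero p
    refine hex.trans ?_
    show ker (P.π.f 0).hom = I
    rw [hπ]
    exact Submodule.ker_mkQ I
  have h2 : range d21 = ker d10 := by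
    have := P.complex_exactAt_succ 0
    rw [HomologicalComplex.exactAt_iff' _ 2 1 0 (by simp) (by simp)] at this
    exact this.moduleCat_range_eq_ker
  have hdd : ∀ x, d10 (d21 x) = 0 := fun x => by
    rw [← mem_ker, ← h2]; exact mem_range_self d21 x
  let S' : ShortComplex (ModuleCat R) :=
    ShortComplex.mk (ModuleCat.ofHom (LinearMap.lcomp R (R ⧸ I) d10))
      (ModuleCat.ofHom (LinearMap.lcomp R (R ⧸ I) d21)) (by
        ext f x; simp [hdd])
  let i₄ : S ≅ S' := ShortComplex.isoMk
    (ModuleCat.homLinearEquiv (M := P.complex.X 0) (N := M) (S := R)).toModuleIso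
    (ModuleCat.homLinearEquiv (M := P.complex.X 1) (N := M) (S := R)).toModuleIso
    (ModuleCat.homLinearEquiv (M := P.complex.X 2) (N := M) (S := R)).toModuleIso
    (by ext φ x; rfl) (by ext φ x; rfl)
  let i₃ : S'.homology ≅ S'.moduleCatLeftHomologyData.H := S'.moduleCatHomologyIso
  have hG : ∀ f : ↥(P.complex.X 1) →ₗ[R] (R ⧸ I), S'.g.hom f = f ∘ₗ d21 := fun f => rfl
  have hT : ∀ z : ker S'.g.hom, z ∈ range S'.moduleCatToCycles ↔
      ∃ f0 : R →ₗ[R] (R ⧸ I), (z.1 : ↥(P.complex.X 1) →ₗ[R] (R ⧸ I)) = f0 ∘ₗ d10 := by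
    intro z
    constructor
    · rintro ⟨x, rfl⟩
      exact ⟨x, rfl⟩
    · rintro ⟨f0, hf0⟩
      exact ⟨f0, Subtype.ext hf0.symm⟩
  let eqv := quotEquiv I d10 d21 h1 h2 S'.g.hom hG S'.moduleCatToCycles hT
  let e₁ : ((R ⧸ J) →ₗ[R] R) ≃ₗ[R] (I : Submodule R R) :=
    (homQuotEquivAnn J).trans (LinearEquiv.ofEq _ _ hIJ.symm)
  let e₂ : (((R ⧸ J) →ₗ[R] R) →ₗ[R] (R ⧸ I)) ≃ₗ[R] ((I : Submodule R R) →ₗ[R] (R ⧸ I)) :=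
    LinearEquiv.arrowCongr e₁ (LinearEquiv.refl R (R ⧸ I))
  exact ⟨(i₁ ≪≫ i₂ ≪≫ ShortComplex.homologyMapIso i₄ ≪≫ i₃).toLinearEquiv ≪≫ₗ eqv ≪≫ₗ e₂.symm⟩
end
end

section
/- Let R be a Noetherian ring and let I, J be ideals of R with I = (0 :_R J) and J = (0 :_R I). Then the associated primes of R/I and R/J are disjoint if and only if I ∩ J = 0. -/
section Aux

variable {R : Type*} [CommRing R]

/-- If every element of `A` is killed into `B` by some element outside the prime `q`,
then (for `A` f.g.) a single element outside `q` works uniformly. -/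
lemma aux_uniform [IsNoetherianRing R] (q A B : Ideal R) (hq : q.IsPrime)
    (h : ∀ x ∈ A, ∃ s, s ∉ q ∧ s * x ∈ B) : ∃ s, s ∉ q ∧ ∀ x ∈ A, s * x ∈ B := by
  classical
  obtain ⟨T, hT⟩ : A.FG := IsNoetherian.noetherian A
  choose! f hf1 hf2 using h
  refine ⟨∏ t ∈ T, f t, ?_, ?_⟩
  · intro hs
    have := Ideal.IsPrime.prod_mem_iff (hp := hq) (x := f) (s := T) |>.mp hs
    obtain ⟨t, ht, htq⟩ := this
    exact hf1 t (hT ▸ Ideal.subset_span ht) htq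
  · intro x hx
    rw [← hT] at hx
    induction hx using Submodule.span_induction with
    | mem t ht =>
      rw [← Finset.prod_erase_mul T f (Finset.mem_coe.mp ht), mul_assoc]
      exact Ideal.mul_mem_left _ _ (hf2 t (hT ▸ Ideal.subset_span ht))
    | zero => simpa using B.zero_mem
    | add a b _ _ ha hb => rw [mul_add]; exact B.add_mem ha hb
    | smul c a _ ha => rw [smul_eq_mul, mul_comm c a, ← mul_assoc]; exact B.mul_mem_right c ha

/-- For a minimal prime `q` of a Noetherian ring, some power of `q` is killed
elementwise by elements outside `q`. -/
lemma aux_nilp [IsNoetherianRing R] (q : Ideal R) (hq : q ∈ minimalPrimes R) :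
    ∃ N : ℕ, ∀ x ∈ q ^ N, ∃ s, s ∉ q ∧ s * x = 0 := by
  haveI hqp : q.IsPrime := hq.1.1
  set L := Localization q.primeCompl
  haveI : IsNoetherianRing L := IsLocalization.isNoetherianRing q.primeCompl L inferInstance
  obtain ⟨N, hN⟩ := IsNoetherianRing.isNilpotent_nilradical L
  refine ⟨N, fun x hx => ?_⟩
  have hmap : Ideal.map (algebraMap R L) q ≤ nilradical L := by
    rw [Ideal.map_le_iff_le_comap]
    intro y hy
    have : IsNilpotent (algebraMap R L y) :=
      by
        haveI : Ring.KrullDimLE 0 L := .of_isLocalization q hq L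
        exact Ring.KrullDimLE.isNilpotent_iff_mem_maximalIdeal.mpr
          ((IsLocalization.AtPrime.to_map_mem_maximal_iff L q y).mpr hy)
    exact this
  have h0 : algebraMap R L x = 0 := by
    have h1 : algebraMap R L x ∈ Ideal.map (algebraMap R L) (q ^ N) :=
      Ideal.mem_map_of_mem _ hx
    rw [Ideal.map_pow] at h1
    have h2 : (Ideal.map (algebraMap R L) q) ^ N ≤ ⊥ := by
      calc (Ideal.map (algebraMap R L) q) ^ N ≤ (nilradical L) ^ N := Ideal.pow_right_mono hmap N
        _ = ⊥ := hN
    simpa using h2 h1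
  obtain ⟨m, hm⟩ := (IsLocalization.map_eq_zero_iff q.primeCompl L x).mp h0
  exact ⟨m, m.2, hm⟩

/-- A minimal prime of a Noetherian ring containing `I` is an associated prime of `R ⧸ I`. -/
lemma aux_minAss [IsNoetherianRing R] (q I : Ideal R) (hq : q ∈ minimalPrimes R)
    (hIq : I ≤ q) : q ∈ associatedPrimes R (R ⧸ I) := by
  haveI hqp : q.IsPrime := hq.1.1
  -- the saturation of I at q
  set I' : Ideal R :=
    { carrier := {r | ∃ s, s ∉ q ∧ s * r ∈ I}
      add_mem' := by
        rintro a b ⟨s, hs, hsa⟩ ⟨t, ht, htb⟩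
        refine ⟨s * t, fun h => ((hqp.mem_or_mem h).elim hs ht), ?_⟩
        rw [mul_add]
        exact I.add_mem (by rw [mul_comm s t, mul_assoc]; exact I.mul_mem_left t hsa)
          (by rw [mul_assoc]; exact I.mul_mem_left s htb)
      zero_mem' := ⟨1, hqp.ne_top ∘ (Ideal.eq_top_iff_one q).mpr, by simpa using I.zero_mem⟩
      smul_mem' := by
        rintro c x ⟨s, hs, hsx⟩
        exact ⟨s, hs, by rw [smul_eq_mul, mul_comm c x, ← mul_assoc]; exact I.mul_mem_right c hsx⟩ }
    with hI'def
  have hI'mem : ∀ r : R, r ∈ I' ↔ ∃ s, s ∉ q ∧ s * r ∈ I := fun r => Iff.rfl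
  have hI'top : (1 : R) ∉ I' := by
    rintro ⟨s, hs, hs1⟩
    rw [mul_one] at hs1
    exact hs (hIq hs1)
  -- some power of q lands in I'
  have hex : ∃ n : ℕ, q ^ n ≤ I' := by
    obtain ⟨N, hN⟩ := aux_nilp q hq
    exact ⟨N, fun x hx => by
      obtain ⟨s, hs, hsx⟩ := hN x hx
      exact ⟨s, hs, by rw [hsx]; exact I.zero_mem⟩⟩
  classical
  set m := Nat.find hex with hm
  have hm0 : m ≠ 0 := by
    intro h
    have := Nat.find_spec hex
    rw [← hm, h, pow_zero, Ideal.one_eq_top] at this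
    exact hI'top (this Submodule.mem_top)
  obtain ⟨k, hk⟩ : ∃ k, m = k + 1 := ⟨m - 1, (Nat.succ_pred_eq_of_ne_zero hm0).symm⟩
  have hklt : ¬ q ^ k ≤ I' := Nat.find_min hex (by omega)
  obtain ⟨v, hv, hvI'⟩ := SetLike.not_le_iff_exists.mp hklt
  have hqv : ∀ x ∈ q, x * v ∈ I' := by
    intro x hx
    have : x * v ∈ q ^ m := by
      rw [hk, pow_succ']
      exact Ideal.mul_mem_mul hx hv
    exact Nat.find_spec hex this
  -- uniformize
  obtain ⟨t, ht, htv⟩ := aux_uniform q q (I.colon (Ideal.span {v})) hqp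
    (fun x hx => by
      obtain ⟨s, hs, hsxv⟩ := hqv x hx
      exact ⟨s, hs, Ideal.mem_colon_span_singleton.mpr (by rw [mul_assoc]; exact hsxv)⟩)
  refine isAssociatedPrime_iff.mpr ⟨hqp, Ideal.Quotient.mk I (t * v), ?_⟩
  ext r
  rw [Submodule.mem_colon_singleton, Submodule.mem_bot]
  have hsmul : r • (Ideal.Quotient.mk I (t * v)) = Ideal.Quotient.mk I (r * (t * v)) := by
    simp [Algebra.smul_def, ← map_mul, Ideal.Quotient.algebraMap_eq]
  rw [hsmul, Ideal.Quotient.eq_zero_iff_mem]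
  constructor
  · intro hr
    have := Ideal.mem_colon_span_singleton.mp (htv r hr)
    rw [mul_comm t r, mul_assoc] at this
    exact this
  · intro hr
    by_contra hrq
    apply hvI'
    refine ⟨r * t, fun h => (hqp.mem_or_mem h).elim hrq ht, ?_⟩
    rw [mul_assoc]
    exact hr

/-- Under linkage `I = ann J` and unmixedness, associated primes of `R ⧸ I` are
associated primes of `R`. -/
lemma aux_assSub [IsNoetherianRing R]
    (hunmixed : ∀ p ∈ associatedPrimes R R, p ∈ minimalPrimes R)
    (I J : Ideal R) (hIJ : I = J.annihilator) :
    associatedPrimes R (R ⧸ I) ⊆ associatedPrimes R R := by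
  rintro p hpa
  obtain ⟨hp, x, hx⟩ := isAssociatedPrime_iff.mp hpa
  obtain ⟨a, rfl⟩ := Ideal.Quotient.mk_surjective x
  have hsmul : ∀ r : R, r • (Ideal.Quotient.mk I a) = Ideal.Quotient.mk I (r * a) := by
    intro r; simp [Algebra.smul_def, ← map_mul, Ideal.Quotient.algebraMap_eq]
  have haI : a ∉ I := by
    intro h
    apply hp.ne_top
    rw [hx, Ideal.eq_top_iff_one, Submodule.mem_colon_singleton, Submodule.mem_bot, hsmul, one_mul,
      Ideal.Quotient.eq_zero_iff_mem]
    exact h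
  -- find j ∈ J with a * j ≠ 0
  have : ¬ ∀ j ∈ J, a • j = 0 := fun h => haI (hIJ ▸ Submodule.mem_annihilator.mpr h)
  push_neg at this
  obtain ⟨j, hj, haj⟩ := this
  rw [smul_eq_mul] at haj
  have hple : p ≤ (Submodule.span R {a * j}).annihilator := by
    intro r hr
    rw [Submodule.mem_annihilator_span_singleton, smul_eq_mul]
    have hra : r * a ∈ I := by
      have := hx ▸ hr
      rw [Submodule.mem_colon_singleton, Submodule.mem_bot, hsmul, Ideal.Quotient.eq_zero_iff_mem] at this
      exact this
    rw [hIJ] at hra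
    have := Submodule.mem_annihilator.mp hra j hj
    rw [smul_eq_mul] at this
    rw [← mul_assoc]
    exact this
  obtain ⟨P, hP, hleP⟩ := exists_le_isAssociatedPrime_of_isNoetherianRing R (a * j) haj
  have hpP : p ≤ P := hple.trans (fun r hr => hleP (by
    rw [Submodule.mem_colon_singleton, Submodule.mem_bot]
    exact (Submodule.mem_annihilator_span_singleton _ _).mp hr))
  have hPmin := hunmixed P hP
  have : P ≤ p := hPmin.2 ⟨hp, bot_le⟩ hpP
  rwa [le_antisymm hpP this]


end Aux

/-- Over a Noetherian (unmixed) ring, if `I` and `J` are linked ideals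
(`I = (0 :_R J)` and `J = (0 :_R I)`), then `Ass(R/I)` and `Ass(R/J)` are disjoint
iff `I ∩ J = 0`. -/
theorem disjoint_ass_iff_inf_eq_bot
    (R : Type) [CommRing R] [IsNoetherianRing R]
    (hunmixed : ∀ p ∈ associatedPrimes R R, p ∈ minimalPrimes R)
    (I J : Ideal R) (hIJ : I = J.annihilator) (hJI : J = I.annihilator) :
    associatedPrimes R (R ⧸ I) ∩ associatedPrimes R (R ⧸ J) = ∅ ↔ I ⊓ J = ⊥ := by
  have hsmulI : ∀ (K : Ideal R) (r a : R),
      r • (Ideal.Quotient.mk K a) = Ideal.Quotient.mk K (r * a) := by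
    intro K r a; simp [Algebra.smul_def, ← map_mul, Ideal.Quotient.algebraMap_eq]
  have hKle : ∀ (K : Ideal R) (p : Ideal R), p ∈ associatedPrimes R (R ⧸ K) → K ≤ p := by
    rintro K p hpa r hr
    obtain ⟨hp, x, hx⟩ := isAssociatedPrime_iff.mp hpa
    obtain ⟨a, rfl⟩ := Ideal.Quotient.mk_surjective x
    rw [hx, Submodule.mem_colon_singleton, Submodule.mem_bot, hsmulI, Ideal.Quotient.eq_zero_iff_mem]
    exact K.mul_mem_right a hr
  constructor
  · -- disjoint → I ⊓ J = ⊥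
    intro hdisj
    by_contra hne
    obtain ⟨w, hw, hw0⟩ := Submodule.exists_mem_ne_zero_of_ne_bot hne
    obtain ⟨q, hq, hleq⟩ := exists_le_isAssociatedPrime_of_isNoetherianRing R w hw0
    have hqmin := hunmixed q hq
    have hIw : I ≤ (Submodule.span R {w}).annihilator := by
      intro i hi
      rw [Submodule.mem_annihilator_span_singleton, smul_eq_mul]
      have hwJ : w ∈ I.annihilator := hJI ▸ hw.2
      have := Submodule.mem_annihilator.mp hwJ i hi
      rw [smul_eq_mul, mul_comm] at this
      exact this
    have hJw : J ≤ (Submodule.span R {w}).annihilator := by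
      intro j hj
      rw [Submodule.mem_annihilator_span_singleton, smul_eq_mul]
      have hwI : w ∈ J.annihilator := hIJ ▸ hw.1
      have := Submodule.mem_annihilator.mp hwI j hj
      rw [smul_eq_mul, mul_comm] at this
      exact this
    have hleq' : (Submodule.span R {w}).annihilator ≤ q := fun r hr => hleq (by
      rw [Submodule.mem_colon_singleton, Submodule.mem_bot]
      exact (Submodule.mem_annihilator_span_singleton _ _).mp hr)
    have h1 : q ∈ associatedPrimes R (R ⧸ I) := aux_minAss q I hqmin (hIw.trans hleq')
    have h2 : q ∈ associatedPrimes R (R ⧸ J) := aux_minAss q J hqmin (hJw.trans hleq')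
    exact Set.eq_empty_iff_forall_notMem.mp hdisj q ⟨h1, h2⟩
  · -- I ⊓ J = ⊥ → disjoint
    intro hinf
    rw [Set.eq_empty_iff_forall_notMem]
    rintro p ⟨hpI, hpJ⟩
    have hIp : I ≤ p := hKle I p hpI
    have hJp : J ≤ p := hKle J p hpJ
    have hpR : p ∈ associatedPrimes R R := aux_assSub hunmixed I J hIJ hpI
    obtain ⟨hp, z, hz⟩ := isAssociatedPrime_iff.mp hpR
    have hz0 : z ≠ 0 := by
      rintro rfl
      apply hp.ne_top
      rw [hz, Submodule.colon_singleton_zero]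
    have hzJ : z ∈ J := by
      rw [hJI, Submodule.mem_annihilator]
      intro i hi
      have : i ∈ p := hIp hi
      rw [hz, Submodule.mem_colon_singleton, Submodule.mem_bot] at this
      rw [smul_eq_mul, mul_comm]
      exact this
    have hzI : z ∈ I := by
      rw [hIJ, Submodule.mem_annihilator]
      intro j hj
      have : j ∈ p := hJp hj
      rw [hz, Submodule.mem_colon_singleton, Submodule.mem_bot] at this
      rw [smul_eq_mul, mul_comm]
      exact this
    have : z ∈ I ⊓ J := Submodule.mem_inf.mpr ⟨hzI, hzJ⟩
    rw [hinf] at this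
    exact hz0 (Submodule.mem_bot R |>.mp this)
end

section
/- Let R be a Noetherian unmixed ring and let I, J be nonzero proper ideals with I = (0 :_R J) and J = (0 :_R I). If Ass_R(R/I) ∩ Ass_R(R/J) = ∅, then the ideal I + J has positive grade, i.e., I + J contains a nonzerodivisor of R. -/
variable {R : Type} [CommRing R]

lemma colon_isPrimary_of_isPrimary {Q : Ideal R} (hQ : Q.IsPrimary) {y : R} (hy : y ∉ Q) :
    (Q.colon (Ideal.span {y})).IsPrimary ∧ (Q.colon (Ideal.span {y})).radical = Q.radical := by
  have hQ' := Ideal.isPrimary_iff.mp hQ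
  have hle : Q.colon (Ideal.span {y}) ≤ Q.radical := by
    intro r hr
    rw [Ideal.mem_colon_span_singleton] at hr
    rcases hQ'.2 (mul_comm r y ▸ hr) with h | h
    · exact absurd h hy
    · exact h
  have hge : Q ≤ Q.colon (Ideal.span {y}) := fun r hr =>
    Ideal.mem_colon_span_singleton.mpr (Ideal.mul_mem_right y Q hr)
  have hrad : (Q.colon (Ideal.span {y})).radical = Q.radical := by
    apply le_antisymm
    · calc (Q.colon (Ideal.span {y})).radical ≤ Q.radical.radical := Ideal.radical_mono hle
        _ = Q.radical := Ideal.radical_idem Q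
    · exact Ideal.radical_mono hge
  refine ⟨Ideal.isPrimary_iff.mpr ⟨?_, ?_⟩, hrad⟩
  · intro h
    have h1 : (1:R) ∈ Q.colon (Ideal.span {y}) := h ▸ Submodule.mem_top
    exact hy (by simpa using Ideal.mem_colon_span_singleton.mp h1)
  · intro a b hab
    rw [Ideal.mem_colon_span_singleton] at hab
    have : (a * y) * b ∈ Q := by have := hab; rw [show a * b * y = a * y * b by ring] at this; exact this
    rcases hQ'.2 this with h | h
    · exact Or.inl (Ideal.mem_colon_span_singleton.mpr h)
    · exact Or.inr (hrad ▸ h)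

lemma mem_associatedPrimes_of_mem_minimalPrimes [IsNoetherianRing R] {I p : Ideal R}
    (hp : p ∈ I.minimalPrimes) : p ∈ associatedPrimes R (R ⧸ I) := by
  classical
  obtain ⟨t, htI, hprim, _hrad, hirr⟩ := Ideal.IsLasker.minimal (Ideal.isLasker R R) I
  have hpprime : p.IsPrime := hp.1.1
  have hIp : I ≤ p := hp.1.2
  obtain ⟨Q, hQt, hQp⟩ := hpprime.inf_le'.1 (htI ▸ hIp : t.inf id ≤ p)
  have hQprim := hprim hQt
  have hIQ : I ≤ Q := htI ▸ Finset.inf_le hQt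
  have hradQ : Ideal.radical Q = p := by
    have h1 : Ideal.radical Q ≤ p := by
      have := Ideal.radical_mono hQp
      rwa [hpprime.radical] at this
    exact le_antisymm h1 (hp.2 ⟨Ideal.isPrime_radical hQprim, hIQ.trans Ideal.le_radical⟩ h1)
  obtain ⟨y, hy1, hy2⟩ : ∃ y ∈ (t.erase Q).inf id, y ∉ Q := by
    by_contra h
    push_neg at h
    exact hirr hQt h
  have hyI : ∀ r : R, r * y ∈ I ↔ r * y ∈ Q := by
    intro r
    constructor
    · intro h; exact hIQ h
    · intro h
      rw [← htI, Submodule.mem_finsetInf]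
      intro J hJ
      by_cases hJQ : J = Q
      · subst hJQ; exact h
      · have : y ∈ (id J : Ideal R) := by
          have := Submodule.mem_finsetInf.mp hy1
          exact this J (Finset.mem_erase.mpr ⟨hJQ, hJ⟩)
        exact Ideal.mul_mem_left _ r this
  have hcolon : I.colon (Ideal.span {y}) = Q.colon (Ideal.span {y}) := by
    ext r
    rw [Ideal.mem_colon_span_singleton, Ideal.mem_colon_span_singleton, hyI]
  obtain ⟨hcprim, hcrad⟩ := colon_isPrimary_of_isPrimary hQprim hy2
  rw [← hcolon] at hcprim hcrad
  have hassoc : associatedPrimes R (R ⧸ I.colon (Ideal.span {y})) = {p} := by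
    rw [associatedPrimes.eq_singleton_of_isPrimary hcprim, hcrad, hradQ]
  -- injective map R ⧸ (I : y) →ₗ R ⧸ I
  set K := I.colon (Ideal.span {y}) with hK
  have hker : ∀ r : R, r * y ∈ I ↔ r ∈ K := fun r => Ideal.mem_colon_span_singleton.symm
  let g : R →ₗ[R] R ⧸ I := (Submodule.mkQ I).comp (LinearMap.toSpanSingleton R R y)
  have hKg : K ≤ LinearMap.ker g := by
    intro r hr
    simp only [g, LinearMap.mem_ker, LinearMap.comp_apply, LinearMap.toSpanSingleton_apply,
      Submodule.mkQ_apply, Submodule.Quotient.mk_eq_zero]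
    exact (hker r).mpr hr
  let f : (R ⧸ K) →ₗ[R] R ⧸ I := Submodule.liftQ K g hKg
  have hfinj : Function.Injective f := by
    rw [← LinearMap.ker_eq_bot, Submodule.ker_liftQ_eq_bot]
    intro r hr
    simp only [g, LinearMap.mem_ker, LinearMap.comp_apply, LinearMap.toSpanSingleton_apply,
      Submodule.mkQ_apply, Submodule.Quotient.mk_eq_zero] at hr
    exact (hker r).mp (by simpa [smul_eq_mul] using hr)
  have := associatedPrimes.subset_of_injective hfinj
  exact this (hassoc ▸ rfl : p ∈ associatedPrimes R (R ⧸ K))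


/-- Over a Noetherian unmixed ring, if nonzero proper ideals `I`, `J` are
linked (`I = (0 :_R J)`, `J = (0 :_R I)`) and `Ass(R/I) ∩ Ass(R/J) = ∅`, then `I + J`
contains a nonzerodivisor of `R` (i.e. has positive grade). -/
theorem sup_contains_nonZeroDivisor_of_geometrically_linked
    (R : Type) [CommRing R] [IsNoetherianRing R]
    (hunmixed : ∀ p ∈ associatedPrimes R R, p ∈ minimalPrimes R)
    (I J : Ideal R) (hI0 : I ≠ ⊥) (hI1 : I ≠ ⊤) (hJ0 : J ≠ ⊥) (hJ1 : J ≠ ⊤)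
    (hIJ : I = J.annihilator) (hJI : J = I.annihilator)
    (hdisj : associatedPrimes R (R ⧸ I) ∩ associatedPrimes R (R ⧸ J) = ∅) :
    ∃ r ∈ I ⊔ J, r ∈ nonZeroDivisors R := by
  classical
  by_contra h
  push_neg at h
  -- every element of I ⊔ J is a zerodivisor
  have hsub : ((I ⊔ J : Ideal R) : Set R) ⊆ ⋃ p ∈ associatedPrimes R R, (p : Set R) := by
    rw [biUnion_associatedPrimes_eq_zero_divisors]
    intro r hr
    have := h r hr
    rw [mem_nonZeroDivisors_iff_right] at this
    push_neg at this
    obtain ⟨x, hx1, hx2⟩ := this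
    exact ⟨x, hx2, by rw [smul_eq_mul, mul_comm]; exact hx1⟩
  have hfin : (associatedPrimes R R).Finite :=
    (minimalPrimes.finite_of_isNoetherianRing R).subset hunmixed
  -- prime avoidance
  have hsub' : ((I ⊔ J : Ideal R) : Set R) ⊆ ⋃ p ∈ (hfin.toFinset : Set (Ideal R)), (id p : Set R) := by
    intro r hr
    have := hsub hr
    simp only [Set.mem_iUnion] at this ⊢
    obtain ⟨p, hp, hrp⟩ := this
    exact ⟨p, hfin.mem_toFinset.mpr hp, hrp⟩
  obtain ⟨p, hps, hle⟩ := (Ideal.subset_union_prime (⊥ : Ideal R) (⊥ : Ideal R)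
    (fun i hi _ _ => ((hfin.mem_toFinset.mp hi).isPrime))).mp hsub'
  have hpass : p ∈ associatedPrimes R R := hfin.mem_toFinset.mp hps
  have hpmin : p ∈ minimalPrimes R := hunmixed p hpass
  have hkey : ∀ L : Ideal R, L ≤ p → p ∈ L.minimalPrimes := by
    intro L hL
    exact ⟨⟨hpass.isPrime, hL⟩, fun q hq hqp => hpmin.2 ⟨hq.1, bot_le⟩ hqp⟩
  have hle' : I ⊔ J ≤ p := hle
  have hpI : p ∈ associatedPrimes R (R ⧸ I) :=
    mem_associatedPrimes_of_mem_minimalPrimes (hkey I (le_sup_left.trans hle'))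
  have hpJ : p ∈ associatedPrimes R (R ⧸ J) :=
    mem_associatedPrimes_of_mem_minimalPrimes (hkey J (le_sup_right.trans hle'))
  have : p ∈ associatedPrimes R (R ⧸ I) ∩ associatedPrimes R (R ⧸ J) := ⟨hpI, hpJ⟩
  rw [hdisj] at this
  exact this
end

section
/- Let (R, m, k) be a Noetherian local ring which is not a field, M a nonzero finitely generated R-module, n ≥ 1 an integer, and suppose λΩ^n M ≅ X ⊕ Y where X is a nonzero finitely generated R-module and Tor_n^R(M, X) = 0. Then X is a nonzero free R-module. -/
open CategoryTheory Opposite IsLocalRing TensorProduct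

section Staircase

variable {R : Type} [CommRing R]

private lemma rT_lT_comm {A B C D : Type} [AddCommGroup A] [AddCommGroup B] [AddCommGroup C]
    [AddCommGroup D] [Module R A] [Module R B] [Module R C] [Module R D]
    (f : A →ₗ[R] B) (g : C →ₗ[R] D) (z : A ⊗[R] C) :
    g.lTensor B (f.rTensor C z) = f.rTensor D (g.lTensor A z) := by
  rw [← LinearMap.comp_apply, ← LinearMap.comp_apply, LinearMap.lTensor_comp_rTensor,
    LinearMap.rTensor_comp_lTensor]

theorem staircase
    (M : Type) [AddCommGroup M] [Module R M]
    (F : ℕ → Type) [∀ i, AddCommGroup (F i)] [∀ i, Module R (F i)]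
    [∀ i, Module.Flat R (F i)]
    (d : ∀ i, F (i + 1) →ₗ[R] F i) (ε : F 0 →ₗ[R] M)
    (hε : Function.Surjective ε)
    (h0 : LinearMap.range (d 0) = LinearMap.ker ε)
    (hexact : ∀ i, LinearMap.range (d (i + 1)) = LinearMap.ker (d i))
    (X : Type) [AddCommGroup X] [Module R X]
    (Q : ℕ → Type) [∀ j, AddCommGroup (Q j)] [∀ j, Module R (Q j)]
    [∀ j, Module.Flat R (Q j)]
    (δ : ∀ j, Q (j + 1) →ₗ[R] Q j) (η : Q 0 →ₗ[R] X)
    (hη : Function.Surjective η)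
    (q0 : LinearMap.range (δ 0) = LinearMap.ker η)
    (qexact : ∀ j, LinearMap.range (δ (j + 1)) = LinearMap.ker (δ j))
    (m : ℕ)
    (htor : LinearMap.ker ((δ m).lTensor M) ≤ LinearMap.range ((δ (m + 1)).lTensor M))
    (u : F (m + 1) ⊗[R] X) (hu : (d m).rTensor X u = 0) :
    u ∈ LinearMap.range ((d (m + 1)).rTensor X) := by
  -- compositions vanish
  have hdd : ∀ i, (d i) ∘ₗ (d (i + 1)) = 0 := fun i =>
    LinearMap.range_le_ker_iff.mp (hexact i).le
  have hδδ : ∀ j, (δ j) ∘ₗ (δ (j + 1)) = 0 := fun j =>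
    LinearMap.range_le_ker_iff.mp (qexact j).le
  have hεd : ε ∘ₗ (d 0) = 0 := LinearMap.range_le_ker_iff.mp h0.le
  have hηδ : η ∘ₗ (δ 0) = 0 := LinearMap.range_le_ker_iff.mp q0.le
  -- the common "tail" step
  have tail : ∀ (p k : ℕ) (z : F (p + 1) ⊗[R] Q k) (zt : F p ⊗[R] Q (k + 1))
      (a : F (p + 1) ⊗[R] Q (k + 1)),
      (δ k).lTensor (F p) zt = (d p).rTensor (Q k) z →
      (∃ b : F p ⊗[R] Q (k + 2), zt = (d p).rTensor (Q (k + 1)) a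
        + (δ (k + 1)).lTensor (F p) b) →
      ∃ a' b', z = (d (p + 1)).rTensor (Q k) a' + (δ k).lTensor (F (p + 1)) b' := by
    intro p k z zt a hzt ⟨b, hb⟩
    have hker : (d p).rTensor (Q k) (z - (δ k).lTensor (F (p + 1)) a) = 0 := by
      rw [map_sub, ← hzt, hb, map_add, ← rT_lT_comm]
      have h1 : (δ k).lTensor (F p) ((δ (k + 1)).lTensor (F p) b) = 0 := by
        rw [← LinearMap.comp_apply, ← LinearMap.lTensor_comp, hδδ, LinearMap.lTensor_zero,
          LinearMap.zero_apply]
      rw [h1, add_zero, sub_self]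
    have hrow : Function.Exact ((d (p + 1)).rTensor (Q k)) ((d p).rTensor (Q k)) :=
      Module.Flat.rTensor_exact (Q k)
        (LinearMap.exact_iff.mpr (hexact p).symm)
    obtain ⟨c, hc⟩ := (hrow _).mp hker
    exact ⟨c, a, by rw [hc]; abel⟩
  -- the base case: p = 0, k = m + 1
  have base : ∀ z : F 0 ⊗[R] Q (m + 1),
      ε.rTensor (Q (m + 1)) z ∈ LinearMap.range ((δ (m + 1)).lTensor M) →
      ∃ a b, z = (d 0).rTensor (Q (m + 1)) a + (δ (m + 1)).lTensor (F 0) b := by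
    intro z ⟨w, hw⟩
    obtain ⟨y, hy⟩ := LinearMap.rTensor_surjective (Q (m + 2)) hε w
    have hker : ε.rTensor (Q (m + 1)) (z - (δ (m + 1)).lTensor (F 0) y) = 0 := by
      rw [map_sub, ← hw, ← hy, rT_lT_comm, sub_self]
    have hrow : Function.Exact ((d 0).rTensor (Q (m + 1))) (ε.rTensor (Q (m + 1))) :=
      Module.Flat.rTensor_exact (Q (m + 1)) (LinearMap.exact_iff.mpr h0.symm)
    obtain ⟨c, hc⟩ := (hrow _).mp hker
    exact ⟨c, y, by rw [hc]; abel⟩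
  -- the main induction, descending in p
  have key : ∀ (p k : ℕ), p + 1 + k = m + 1 → ∀ z : F (p + 1) ⊗[R] Q k,
      (d p).rTensor (Q k) z ∈ LinearMap.range ((δ k).lTensor (F p)) →
      ∃ a b, z = (d (p + 1)).rTensor (Q k) a + (δ k).lTensor (F (p + 1)) b := by
    intro p
    induction p with
    | zero =>
      intro k hk z hz
      have hkm : k = m := by omega
      subst hkm
      obtain ⟨zt, hzt⟩ := hz
      have hbase : ε.rTensor (Q (k + 1)) zt ∈ LinearMap.range ((δ (k + 1)).lTensor M) := by
        apply htor
        rw [LinearMap.mem_ker, rT_lT_comm, hzt, ← LinearMap.comp_apply,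
          ← LinearMap.rTensor_comp, hεd, LinearMap.rTensor_zero, LinearMap.zero_apply]
      obtain ⟨a, b, hab⟩ := base zt hbase
      exact tail 0 k z zt a hzt ⟨b, hab⟩
    | succ p ih =>
      intro k hk z hz
      obtain ⟨zt, hzt⟩ := hz
      have hstep : (d p).rTensor (Q (k + 1)) zt ∈
          LinearMap.range ((δ (k + 1)).lTensor (F p)) := by
        have hcol : Function.Exact ((δ (k + 1)).lTensor (F p)) ((δ k).lTensor (F p)) :=
          Module.Flat.lTensor_exact (F p) (LinearMap.exact_iff.mpr (qexact k).symm)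
        apply (hcol _).mp
        rw [rT_lT_comm, hzt, ← LinearMap.comp_apply, ← LinearMap.rTensor_comp, hdd,
          LinearMap.rTensor_zero, LinearMap.zero_apply]
      obtain ⟨a, b, hab⟩ := ih (k + 1) (by omega) zt hstep
      exact tail (p + 1) k z zt a hzt ⟨b, hab⟩
  -- lift u to the resolution of X and conclude
  obtain ⟨z₀, hz₀⟩ := LinearMap.lTensor_surjective (F (m + 1)) hη u
  have hhyp : (d m).rTensor (Q 0) z₀ ∈ LinearMap.range ((δ 0).lTensor (F m)) := by
    have hcol : Function.Exact ((δ 0).lTensor (F m)) (η.lTensor (F m)) :=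
      Module.Flat.lTensor_exact (F m) (LinearMap.exact_iff.mpr q0.symm)
    apply (hcol _).mp
    rw [rT_lT_comm, hz₀, hu]
  obtain ⟨a, b, hab⟩ := key m 0 rfl z₀ hhyp
  refine ⟨η.lTensor (F (m + 2)) a, ?_⟩
  have := congrArg (η.lTensor (F (m + 1))) hab
  rw [hz₀, map_add, rT_lT_comm, ← LinearMap.comp_apply (η.lTensor (F (m + 1))),
    ← LinearMap.lTensor_comp, hηδ, LinearMap.lTensor_zero, LinearMap.zero_apply,
    add_zero] at this
  exact this.symm

end Staircase

section Psi

variable {R : Type} [CommRing R]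

noncomputable def psiAux (A : Type) (X : Type) [AddCommGroup A] [Module R A] [AddCommGroup X]
    [Module R X] [Module.Finite R A] [Module.Free R A] :
    A ⊗[R] X ≃ₗ[R] (Module.Dual R A →ₗ[R] X) :=
  (TensorProduct.congr (Module.evalEquiv R A) (LinearEquiv.refl R X)).trans
    (dualTensorHomEquiv R (Module.Dual R A) X)

lemma psiAux_apply (A : Type) (X : Type) [AddCommGroup A] [Module R A] [AddCommGroup X]
    [Module R X] [Module.Finite R A] [Module.Free R A] (a : A) (x : X) (f : Module.Dual R A) :
    psiAux A X (a ⊗ₜ x) f = f a • x := by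
  simp [psiAux, Module.evalEquiv_apply]

lemma psiAux_natural {A B : Type} (X : Type) [AddCommGroup A] [Module R A] [AddCommGroup B]
    [Module R B] [AddCommGroup X] [Module R X] [Module.Finite R A] [Module.Free R A]
    [Module.Finite R B] [Module.Free R B] (g : A →ₗ[R] B) (t : A ⊗[R] X)
    (f : Module.Dual R B) :
    psiAux B X (g.rTensor X t) f = psiAux A X t (g.dualMap f) := by
  induction t with
  | zero => simp
  | tmul a x => simp [psiAux_apply]
  | add s t hs ht => simp only [map_add, LinearMap.add_apply, hs, ht]

end Psi

/-- Let `(R, m, k)` be a Noetherian local ring which is not a field,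
`M` a nonzero finitely generated `R`-module with minimal free resolution `(F_•, d_•, ε)`,
`n ≥ 1`, and suppose `λΩⁿM = Ω Tr ΩⁿM = im((d n)* : Fₙ* → F_{n+1}*) ≅ X ⊕ Y` with `X`
nonzero and `Tor_n^R(M, X) = 0`.  Then `X` is a nonzero free `R`-module. -/
theorem summand_free_of_tor_vanishes
    (R : Type) [CommRing R] [IsNoetherianRing R] [IsLocalRing R] (hR : ¬ IsField R)
    (M : Type) [AddCommGroup M] [Module R M] [Module.Finite R M] [Nontrivial M]
    -- a minimal free resolution of M
    (F : ℕ → Type) [∀ i, AddCommGroup (F i)] [∀ i, Module R (F i)]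
    [∀ i, Module.Finite R (F i)] [∀ i, Module.Free R (F i)]
    (d : ∀ i, F (i + 1) →ₗ[R] F i) (ε : F 0 →ₗ[R] M)
    (hε : Function.Surjective ε)
    (h0 : LinearMap.range (d 0) = LinearMap.ker ε)
    (hexact : ∀ i, LinearMap.range (d (i + 1)) = LinearMap.ker (d i))
    (hmin : ∀ i, LinearMap.range (d i) ≤ (maximalIdeal R) • (⊤ : Submodule R (F i)))
    (n : ℕ) (hn : 1 ≤ n)
    -- λΩⁿM ≅ X ⊕ Y with X nonzero
    (X Y : Type) [AddCommGroup X] [Module R X] [Module.Finite R X] [Nontrivial X]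
    [AddCommGroup Y] [Module R Y] [Module.Finite R Y]
    (e : (LinearMap.range ((d n).dualMap) : Submodule R (Module.Dual R (F (n + 1))))
      ≃ₗ[R] X × Y)
    -- Tor_n(M, X) = 0
    (htor : Subsingleton
      (((Tor (ModuleCat.{0} R) n).obj (ModuleCat.of R M)).obj (ModuleCat.of R X))) :
    Module.Free R X ∧ Nontrivial X := by
  obtain ⟨m, rfl⟩ : ∃ m, n = m + 1 := ⟨n - 1, by omega⟩
  classical
  -- a projective resolution of X
  obtain ⟨P⟩ := HasProjectiveResolution.out (Z := ModuleCat.of R X)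
  set Q : ℕ → Type := fun j => (P.complex.X j : Type) with hQ
  haveI hQproj : ∀ j, Module.Projective R (Q j) := fun j =>
    (P.complex.X j).projective_of_module_projective
  let δ : ∀ j, Q (j + 1) →ₗ[R] Q j := fun j => (P.complex.d (j + 1) j).hom
  -- the augmentation
  let νe : ((((ChainComplex.single₀ (ModuleCat R)).obj (ModuleCat.of R X)).X 0 : Type) ≃ₗ[R] X) :=
    (HomologicalComplex.singleObjXSelf (ComplexShape.down ℕ) 0 (ModuleCat.of R X)).toLinearEquiv
  let ν : (((ChainComplex.single₀ (ModuleCat R)).obj (ModuleCat.of R X)).X 0 : Type) →ₗ[R] X :=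
    νe.toLinearMap
  have hν_inj : Function.Injective ν := νe.injective
  have hν_surj : Function.Surjective ν := νe.surjective
  let η : Q 0 →ₗ[R] X := ν ∘ₗ (P.π.f 0).hom
  have hη : Function.Surjective η :=
    hν_surj.comp ((ModuleCat.epi_iff_surjective _).mp inferInstance)
  have q0 : LinearMap.range (δ 0) = LinearMap.ker η := by
    have h1 : LinearMap.range (P.complex.d 1 0).hom = LinearMap.ker (P.π.f 0).hom :=
      (ShortComplex.moduleCat_exact_iff_range_eq_ker _).mp P.exact₀
    have h2 : LinearMap.ker η = LinearMap.ker (P.π.f 0).hom := by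
      rw [show η = ν ∘ₗ (P.π.f 0).hom from rfl, LinearMap.ker_comp,
        LinearMap.ker_eq_bot.mpr hν_inj, Submodule.comap_bot]
    rw [h2]; exact h1
  have qexact : ∀ j, LinearMap.range (δ (j + 1)) = LinearMap.ker (δ j) := fun j =>
    (ShortComplex.moduleCat_exact_iff_range_eq_ker _).mp (P.exact_succ j)
  -- extract exactness of `M ⊗ Q•` at `m + 1` from the Tor hypothesis
  let TL := (MonoidalCategory.tensoringLeft (ModuleCat.{0} R)).obj (ModuleCat.of R M)
  let K := (TL.mapHomologicalComplex (ComplexShape.down ℕ)).obj P.complex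
  have hz1 : Limits.IsZero ((TL.leftDerived (m + 1)).obj (ModuleCat.of R X)) := by
    haveI : Subsingleton ((TL.leftDerived (m + 1)).obj (ModuleCat.of R X)) := htor
    exact ModuleCat.isZero_of_subsingleton _
  have hz2 : Limits.IsZero (K.homology (m + 1)) :=
    Limits.IsZero.of_iso hz1 (P.isoLeftDerivedObj TL (m + 1)).symm
  have hK : K.ExactAt (m + 1) :=
    (HomologicalComplex.exactAt_iff_isZero_homology _ _).2 hz2
  have hS : (K.sc' (m + 2) (m + 1) m).Exact :=
    (HomologicalComplex.exactAt_iff' K (m + 2) (m + 1) m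
      (by simp [ChainComplex.prev]) (by simp [ChainComplex.next_nat_succ])).1 hK
  have htor' : LinearMap.ker ((δ m).lTensor M) ≤
      LinearMap.range ((δ (m + 1)).lTensor M) := by
    intro w hw
    obtain ⟨v, hv⟩ := (ShortComplex.moduleCat_exact_iff _).mp hS w hw
    exact ⟨v, hv⟩
  -- compositions vanish
  have hdd : ∀ i, (d i) ∘ₗ (d (i + 1)) = 0 := fun i =>
    LinearMap.range_le_ker_iff.mp (hexact i).le
  -- the element `u` corresponding to the projection `λΩⁿM → X` extended over `F n ⊗ X`
  let p : Module.Dual R (F (m + 1)) →ₗ[R] X :=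
    (LinearMap.fst R X Y) ∘ₗ (e.toLinearMap ∘ₗ (d (m + 1)).dualMap.rangeRestrict)
  let u : F (m + 1) ⊗[R] X := (psiAux (F (m + 1)) X).symm p
  have hpu : psiAux (F (m + 1)) X u = p := (psiAux (F (m + 1)) X).apply_symm_apply p
  have hu : (d m).rTensor X u = 0 := by
    rw [← (psiAux (F m) X).map_eq_zero_iff]
    ext f
    rw [psiAux_natural, hpu]
    have h1 : ((d (m + 1)).dualMap.rangeRestrict) ((d m).dualMap f) = 0 := by
      apply Subtype.ext
      show (d (m + 1)).dualMap ((d m).dualMap f) = 0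
      rw [LinearMap.dualMap_apply', LinearMap.dualMap_apply', LinearMap.comp_assoc,
        hdd m, LinearMap.comp_zero]
    show (LinearMap.fst R X Y) (e (((d (m + 1)).dualMap.rangeRestrict) ((d m).dualMap f))) =
      (0 : Module.Dual R (F m) →ₗ[R] X) f
    rw [h1, map_zero]
    rfl
  -- apply the staircase lemma
  obtain ⟨t, ht⟩ := staircase M F d ε hε h0 hexact X Q δ η hη q0 qexact m htor' u hu
  let φ : Module.Dual R (F (m + 2)) →ₗ[R] X := psiAux (F (m + 2)) X t
  -- φ splits the inclusion of X
  haveI hXproj : Module.Projective R X := by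
    apply Module.Projective.of_split
      ((Submodule.subtype _) ∘ₗ (e.symm.toLinearMap ∘ₗ (LinearMap.inl R X Y))) φ
    ext x
    show φ ((e.symm (x, 0) : (LinearMap.range ((d (m + 1)).dualMap) :
      Submodule R (Module.Dual R (F (m + 2)))))) = x
    obtain ⟨ξ, hξ⟩ := (e.symm (x, 0)).2
    have h2 : φ ((d (m + 1)).dualMap ξ) = p ξ := by
      show psiAux (F (m + 2)) X t ((d (m + 1)).dualMap ξ) = p ξ
      rw [← psiAux_natural, ht, hpu]
    have h3 : ((d (m + 1)).dualMap.rangeRestrict) ξ = e.symm (x, 0) := Subtype.ext hξ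
    calc φ ((e.symm (x, 0) : Module.Dual R (F (m + 2)))) = φ ((d (m + 1)).dualMap ξ) := by
          rw [hξ]
      _ = p ξ := h2
      _ = (LinearMap.fst R X Y) (e (((d (m + 1)).dualMap.rangeRestrict) ξ)) := rfl
      _ = (LinearMap.fst R X Y) (e (e.symm (x, 0))) := by rw [h3]
      _ = x := by rw [e.apply_symm_apply]; rfl
  haveI : Module.FinitePresentation R X := Module.finitePresentation_of_finite R X
  exact ⟨Module.free_of_flat_of_isLocalRing, inferInstance⟩
end
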